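/- The ring of MacMahon symmetric functions S (the inverse limit of the rings ℂ[x₁,...,x_n,y₁,...,y_n]^{S_n} under the maps setting the last pair of variables to zero) is a polynomial ring freely generated by the power-sum-type monomial symmetric functions m_{(a,b)} for (a,b) ∈ ℕ×ℕ \ {(0,0)}. -/

import Mathlib

/-- The monomial MacMahon symmetric function `m_Λ` attached to a bipartite partition
`Λ` (a multiset of vectors in `ℕ×ℕ`), as a formal power series in two families of
variables `xᵢ = X (i,0)`, `yᵢ = X (i,1)`: the sum, with coefficients `0` or `1`, of all
monomials whose multiset of exponent pairs equals `Λ`. -/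
noncomputable def mm (Λ : Multiset (ℕ × ℕ)) : MvPowerSeries (ℕ × Fin 2) ℂ :=
  fun d => if (d.support.image Prod.fst).val.map
      (fun i => (d (i, 0), d (i, 1))) = Λ then 1 else 0


namespace MacMahon
open MvPowerSeries

abbrev I := ℕ × Fin 2

def g (d : I →₀ ℕ) (i : ℕ) : ℕ × ℕ := (d (i, 0), d (i, 1))

def msupp (d : I →₀ ℕ) : Finset ℕ := d.support.image Prod.fst

def mset (d : I →₀ ℕ) : Multiset (ℕ × ℕ) := (msupp d).val.map (g d)

lemma coeff_mm (Λ : Multiset (ℕ × ℕ)) (d : I →₀ ℕ) :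
    MvPowerSeries.coeff d (mm Λ) = if mset d = Λ then 1 else 0 := rfl

lemma mem_msupp {d : I →₀ ℕ} {i : ℕ} : i ∈ msupp d ↔ g d i ≠ 0 := by
  simp only [msupp, Finset.mem_image, Finsupp.mem_support_iff, g, Ne, Prod.mk_eq_zero,
    not_and_or]
  constructor
  · rintro ⟨⟨j, k⟩, hk, rfl⟩
    fin_cases k
    · exact Or.inl hk
    · exact Or.inr hk
  · rintro (h | h)
    · exact ⟨(i, 0), h, rfl⟩
    · exact ⟨(i, 1), h, rfl⟩

lemma card_mset (d : I →₀ ℕ) : Multiset.card (mset d) = (msupp d).card := by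
  rw [mset, Multiset.card_map]; rfl

lemma zero_not_mem_mset (d : I →₀ ℕ) : (0 : ℕ × ℕ) ∉ mset d := by
  simp only [mset, Multiset.mem_map]
  rintro ⟨i, hi, h0⟩
  exact mem_msupp.1 hi h0

lemma g_eq_ext {d d' : I →₀ ℕ} (h : ∀ i, g d i = g d' i) : d = d' := by
  ext ⟨j, k⟩
  fin_cases k
  · exact congrArg Prod.fst (h j)
  · exact congrArg Prod.snd (h j)

lemma mset_eq_zero {d : I →₀ ℕ} : mset d = 0 ↔ d = 0 := by
  constructor
  · intro h
    apply g_eq_ext (d' := 0)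
    intro i
    by_contra hne
    have hi : i ∈ msupp d := mem_msupp.2 (by simpa [g] using hne)
    have : g d i ∈ mset d := Multiset.mem_map_of_mem _ (by simpa using hi)
    rw [h] at this
    simp at this
  · rintro rfl
    simp [mset, msupp]


noncomputable def e (i : ℕ) (v : ℕ × ℕ) : I →₀ ℕ :=
  Finsupp.single (i, 0) v.1 + Finsupp.single (i, 1) v.2

lemma e_apply (i : ℕ) (v : ℕ × ℕ) (j : ℕ) (k : Fin 2) :
    e i v (j, k) = if j = i then (if k = 0 then v.1 else v.2) else 0 := by
  simp only [e, Finsupp.add_apply, Finsupp.single_apply, Prod.mk.injEq]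
  by_cases h : j = i
  · subst h; fin_cases k <;> simp
  · simp [h, Ne.symm h]

lemma g_e (i : ℕ) (v : ℕ × ℕ) (j : ℕ) : g (e i v) j = if j = i then v else 0 := by
  simp only [g, e_apply]
  by_cases h : j = i <;> simp [h, Prod.ext_iff]

lemma g_add (d d' : I →₀ ℕ) (i : ℕ) : g (d + d') i = g d i + g d' i := by
  simp [g, Prod.ext_iff]

lemma g_sub (d d' : I →₀ ℕ) (i : ℕ) : g (d - d') i = g d i - g d' i := by
  simp [g, Finsupp.tsub_apply, Prod.ext_iff]

lemma mset_add_e {i : ℕ} {v : ℕ × ℕ} {d : I →₀ ℕ} (hv : v ≠ 0) (hi : i ∉ msupp d) :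
    mset (e i v + d) = v ::ₘ mset d := by
  have hgd : g d i = 0 := by
    by_contra h; exact hi (mem_msupp.2 h)
  have hg : ∀ j, g (e i v + d) j = if j = i then v else g d j := by
    intro j
    rw [g_add, g_e]
    by_cases h : j = i <;> simp [h, hgd]
  have hsupp : msupp (e i v + d) = insert i (msupp d) := by
    ext j
    rw [mem_msupp, Finset.mem_insert, mem_msupp, hg]
    by_cases h : j = i <;> simp [h, hv]
  rw [mset, hsupp, Finset.insert_val_of_notMem (by simpa using hi), Multiset.map_cons,
    hg, if_pos rfl]
  congr 1
  · rw [mset]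
    apply Multiset.map_congr rfl
    intro j hj
    rw [hg, if_neg]
    rintro rfl
    exact hi (by simpa using hj)

lemma mset_e {i : ℕ} {v : ℕ × ℕ} (hv : v ≠ 0) : mset (e i v) = {v} := by
  have h0 : (i : ℕ) ∉ msupp (0 : I →₀ ℕ) := by simp [msupp]
  have h := mset_add_e (i := i) (d := 0) hv h0
  rw [add_zero] at h
  rw [h]
  simp [mset, msupp]

lemma exists_mset (μ : Multiset (ℕ × ℕ)) (hμ : (0 : ℕ × ℕ) ∉ μ) : ∃ d : I →₀ ℕ, mset d = μ := by
  induction μ using Multiset.induction_on with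
  | empty => exact ⟨0, by simp [mset, msupp]⟩
  | cons v μ ih =>
      obtain ⟨d, hd⟩ := ih (fun h => hμ (Multiset.mem_cons_of_mem h))
      obtain ⟨i, hi⟩ := Infinite.exists_notMem_finset (msupp d)
      refine ⟨e i v + d, ?_⟩
      rw [mset_add_e (fun h => hμ (h ▸ Multiset.mem_cons_self _ _)) hi, hd]

lemma e_le_iff {i : ℕ} {v : ℕ × ℕ} {d : I →₀ ℕ} : e i v ≤ d ↔ v ≤ g d i := by
  rw [Finsupp.le_def]
  constructor
  · intro h
    constructor
    · have := h (i, 0); rwa [e_apply, if_pos rfl, if_pos rfl] at this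
    · have := h (i, 1); rwa [e_apply, if_pos rfl, if_neg (by decide)] at this
  · intro h ⟨j, k⟩
    rw [e_apply]
    by_cases hj : j = i
    · subst hj
      fin_cases k
      · simpa [g] using h.1
      · simpa [g] using h.2
    · simp [hj]

/-- The reduced bipartite partition after subtracting `v` from a part equal to `w`. -/
def red (v w : ℕ × ℕ) (μ : Multiset (ℕ × ℕ)) : Multiset (ℕ × ℕ) :=
  if w = v then μ.erase w else (w - v) ::ₘ μ.erase w

lemma mset_sub_e {i : ℕ} {v : ℕ × ℕ} {d : I →₀ ℕ} (hv : v ≠ 0) (hi : i ∈ msupp d)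
    (hle : v ≤ g d i) : mset (d - e i v) = red v (g d i) (mset d) := by
  classical
  set w := g d i with hw
  have hg : ∀ j, g (d - e i v) j = if j = i then w - v else g d j := by
    intro j
    rw [g_sub, g_e]
    by_cases h : j = i <;> simp [h, hw]
  -- mset d = w ::ₘ (map over erase)
  have hival : (msupp d).val = i ::ₘ ((msupp d).erase i).val := by
    rw [Finset.erase_val]
    exact (Multiset.cons_erase (by simpa using hi)).symm
  have hmd : mset d = w ::ₘ ((msupp d).erase i).val.map (g d) := by
    rw [mset, hival, Multiset.map_cons, hw]
  have herase : (mset d).erase w = ((msupp d).erase i).val.map (g d) := by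
    rw [hmd, Multiset.erase_cons_head]
  have hmapeq : ((msupp d).erase i).val.map (g (d - e i v)) =
      ((msupp d).erase i).val.map (g d) := by
    apply Multiset.map_congr rfl
    intro j hj
    rw [hg, if_neg]
    intro h
    exact Finset.ne_of_mem_erase (Finset.mem_def.2 hj) h
  by_cases hcase : w = v
  · -- index i disappears
    have hsupp : msupp (d - e i v) = (msupp d).erase i := by
      ext j
      rw [mem_msupp, Finset.mem_erase, mem_msupp, hg]
      by_cases h : j = i <;> simp [h, hcase]
    rw [red, if_pos hcase, mset, hsupp, hmapeq, herase]
  · have hwv : w - v ≠ 0 := by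
      intro h0
      exact hcase (le_antisymm (tsub_eq_zero_iff_le.1 h0) hle)
    have hsupp : msupp (d - e i v) = msupp d := by
      ext j
      rw [mem_msupp, mem_msupp, hg]
      by_cases h : j = i <;> simp [h, hwv, mem_msupp.1 hi]
    rw [red, if_neg hcase, mset, hsupp, hival, Multiset.map_cons, hg, if_pos rfl, hmapeq,
      herase]

lemma e_inj {i i' : ℕ} {v : ℕ × ℕ} (hv : v ≠ 0) (h : e i v = e i' v) : i = i' := by
  have := g_e i v i
  rw [h, g_e, if_pos rfl] at this
  by_cases hii : i = i'
  · exact hii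
  · rw [if_neg hii] at this; exact absurd this.symm hv

lemma mset_eq_single_iff {v : ℕ × ℕ} (hv : v ≠ 0) {d : I →₀ ℕ} :
    mset d = {v} ↔ ∃ i, d = e i v := by
  constructor
  · intro h
    have hcard : (msupp d).card = 1 := by
      rw [← card_mset d, h]; rfl
    obtain ⟨i, hi⟩ := Finset.card_eq_one.1 hcard
    have hgi : g d i = v := by
      have : mset d = {g d i} := by rw [mset, hi]; rfl
      rw [h] at this
      exact (Multiset.singleton_inj.1 this.symm)
    refine ⟨i, g_eq_ext fun j => ?_⟩
    rw [g_e]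
    by_cases hj : j = i
    · subst hj; simp [hgi]
    · simp only [hj, if_false]
      by_contra hne
      have : j ∈ msupp d := mem_msupp.2 hne
      rw [hi] at this
      simp at this
      exact hj this
  · rintro ⟨i, rfl⟩
    exact mset_e hv

lemma coeff_single_mul {v : ℕ × ℕ} (hv : v ≠ 0) (F : MvPowerSeries I ℂ) (d : I →₀ ℕ) :
    MvPowerSeries.coeff d (mm {v} * F) =
      ∑ i ∈ msupp d, if e i v ≤ d then MvPowerSeries.coeff (d - e i v) F else 0 := by
  classical
  rw [MvPowerSeries.coeff_mul]
  have lhs : ∑ p ∈ Finset.HasAntidiagonal.antidiagonal d,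
      MvPowerSeries.coeff p.1 (mm {v}) * MvPowerSeries.coeff p.2 F =
      ∑ p ∈ (Finset.HasAntidiagonal.antidiagonal d).filter (fun p => mset p.1 = {v}),
        MvPowerSeries.coeff p.2 F := by
    rw [Finset.sum_filter]
    apply Finset.sum_congr rfl
    intro p _
    rw [coeff_mm]
    by_cases h : mset p.1 = {v} <;> simp [h]
  rw [lhs]
  have rhs : ∑ i ∈ msupp d, (if e i v ≤ d then MvPowerSeries.coeff (d - e i v) F else 0) =
      ∑ i ∈ (msupp d).filter (fun i => e i v ≤ d), MvPowerSeries.coeff (d - e i v) F := by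
    rw [Finset.sum_filter]
  rw [rhs]
  symm
  apply Finset.sum_bij (fun i _ => ((e i v), d - e i v))
  · intro a ha
    rw [Finset.mem_filter] at ha
    rw [Finset.mem_filter, Finset.HasAntidiagonal.mem_antidiagonal]
    exact ⟨add_tsub_cancel_of_le ha.2, mset_e hv⟩
  · intro a ha b hb hab
    exact e_inj hv (congrArg Prod.fst hab)
  · intro p hp
    rw [Finset.mem_filter, Finset.HasAntidiagonal.mem_antidiagonal] at hp
    obtain ⟨hsum, hmset⟩ := hp
    obtain ⟨i, hp1⟩ := (mset_eq_single_iff hv).1 hmset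
    have hle : e i v ≤ d := by
      rw [← hsum, ← hp1]; exact le_add_right le_rfl
    have hvle : v ≤ g d i := e_le_iff.1 hle
    have hgi : g d i ≠ 0 := by
      intro h0
      rw [h0] at hvle
      exact hv (le_antisymm hvle (zero_le (a := v)))
    refine ⟨i, Finset.mem_filter.2 ⟨mem_msupp.2 hgi, hle⟩, ?_⟩
    have h2 : p.2 = d - e i v := by
      rw [← hsum, hp1, add_tsub_cancel_left]
    rw [← h2, ← hp1]
  · intro a ha
    rfl

open Classical in
/-- Multiplicity of `mm μ` in `mm {v} * mm M`. -/
noncomputable def acoef (v : ℕ × ℕ) (M μ : Multiset (ℕ × ℕ)) : ℕ :=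
  Multiset.countP (fun w => v ≤ w ∧ M = red v w μ) μ

/-- The multisets that can appear in `mm {v} * mm M`. -/
noncomputable def T (v : ℕ × ℕ) (M : Multiset (ℕ × ℕ)) : Finset (Multiset (ℕ × ℕ)) :=
  insert (v ::ₘ M) (M.toFinset.image fun w => (w + v) ::ₘ M.erase w)

lemma of_mem_T {v : ℕ × ℕ} {M μ : Multiset (ℕ × ℕ)} (h : μ ∈ T v M) :
    μ = v ::ₘ M ∨ ∃ w ∈ M, μ = (w + v) ::ₘ M.erase w := by
  rw [T, Finset.mem_insert] at h
  rcases h with h | h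
  · exact Or.inl h
  · right
    obtain ⟨w, hw, rfl⟩ := Finset.mem_image.1 h
    exact ⟨w, Multiset.mem_toFinset.1 hw, rfl⟩

lemma mem_T_of_acoef_ne_zero {v : ℕ × ℕ} {M μ : Multiset (ℕ × ℕ)}
    (h : acoef v M μ ≠ 0) : μ ∈ T v M := by
  classical
  rw [acoef] at h
  obtain ⟨w, hw, hle, hred⟩ := Multiset.countP_pos.1 (Nat.pos_of_ne_zero h)
  by_cases hcase : w = v
  · subst hcase
    rw [red, if_pos rfl] at hred
    rw [T, Finset.mem_insert]
    left
    rw [hred, Multiset.cons_erase hw]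
  · rw [red, if_neg hcase] at hred
    have hu : w - v ∈ M := by rw [hred]; exact Multiset.mem_cons_self _ _
    have huv : w - v + v = w := tsub_add_cancel_of_le hle
    have herase : M.erase (w - v) = μ.erase w := by
      rw [hred, Multiset.erase_cons_head]
    rw [T, Finset.mem_insert]
    right
    refine Finset.mem_image.2 ⟨w - v, Multiset.mem_toFinset.2 hu, ?_⟩
    rw [huv, herase, Multiset.cons_erase hw]

lemma acoef_cons_pos (v : ℕ × ℕ) (M : Multiset (ℕ × ℕ)) : 0 < acoef v M (v ::ₘ M) := by
  classical
  rw [acoef]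
  apply Multiset.countP_pos.2
  exact ⟨v, Multiset.mem_cons_self _ _, le_rfl, by rw [red, if_pos rfl, Multiset.erase_cons_head]⟩

lemma countP_mset (d : I →₀ ℕ) (p : ℕ × ℕ → Prop) [DecidablePred p]
    [DecidablePred (fun i => p (g d i))] :
    Multiset.countP p (mset d) = ((msupp d).filter (fun i => p (g d i))).card := by
  rw [Finset.card, Finset.filter_val, mset, Multiset.countP_map]
  congr!

lemma prod_mm {v : ℕ × ℕ} (hv : v ≠ 0) (M : Multiset (ℕ × ℕ)) :
    mm {v} * mm M = ∑ μ ∈ T v M, (acoef v M μ : ℂ) • mm μ := by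
  classical
  ext d
  rw [coeff_single_mul hv]
  have lhs : ∑ i ∈ msupp d, (if e i v ≤ d then MvPowerSeries.coeff (d - e i v) (mm M) else 0)
      = (acoef v M (mset d) : ℂ) := by
    have step1 : ∀ i ∈ msupp d,
        (if e i v ≤ d then MvPowerSeries.coeff (d - e i v) (mm M) else 0) =
        (if v ≤ g d i ∧ M = red v (g d i) (mset d) then 1 else 0) := by
      intro i hi
      by_cases hle : v ≤ g d i
      · rw [if_pos (e_le_iff.2 hle), coeff_mm, mset_sub_e hv hi hle]
        by_cases h : red v (g d i) (mset d) = M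
        · rw [if_pos h, if_pos ⟨hle, h.symm⟩]
        · rw [if_neg h, if_neg (fun hh => h hh.2.symm)]
      · rw [if_neg (fun hh => hle (e_le_iff.1 hh)), if_neg (fun hh => hle hh.1)]
    rw [Finset.sum_congr rfl step1, Finset.sum_boole]
    norm_cast
    rw [acoef, countP_mset]
  rw [lhs, map_sum]
  have rhsterm : ∀ μ ∈ T v M, MvPowerSeries.coeff d ((acoef v M μ : ℂ) • mm μ) =
      (if mset d = μ then (acoef v M μ : ℂ) else 0) := by
    intro μ _
    rw [map_smul, coeff_mm, smul_eq_mul]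
    by_cases h : mset d = μ <;> simp [h]
  rw [Finset.sum_congr rfl rhsterm]
  have : ∑ μ ∈ T v M, (if mset d = μ then (acoef v M μ : ℂ) else 0) =
      if mset d ∈ T v M then (acoef v M (mset d) : ℂ) else 0 := Finset.sum_ite_eq _ _ _
  rw [this]
  by_cases hmem : mset d ∈ T v M
  · rw [if_pos hmem]
  · rw [if_neg hmem]
    norm_cast
    by_contra h
    exact hmem (mem_T_of_acoef_ne_zero h)

/-- The product of the power sums `mm {v}` over the parts of `Λ`. -/
noncomputable def P (Λ : Multiset (ℕ × ℕ)) : MvPowerSeries I ℂ :=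
  (Λ.map fun v => mm {v}).prod

def lowSet (n : ℕ) : Set (MvPowerSeries I ℂ) :=
  {x | ∃ μ : Multiset (ℕ × ℕ), (0 : ℕ × ℕ) ∉ μ ∧ Multiset.card μ < n ∧ x = mm μ}

lemma lowSet_mono {n n' : ℕ} (h : n ≤ n') : lowSet n ⊆ lowSet n' := by
  rintro x ⟨μ, h0, hc, rfl⟩
  exact ⟨μ, h0, lt_of_lt_of_le hc h, rfl⟩

lemma mm_zero : mm 0 = 1 := by
  ext d
  rw [coeff_mm, MvPowerSeries.coeff_one]
  by_cases h : d = 0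
  · rw [if_pos (mset_eq_zero.2 h), if_pos h]
  · rw [if_neg (fun hh => h (mset_eq_zero.1 hh)), if_neg h]

lemma zero_add_ne {v w : ℕ × ℕ} (hv : v ≠ 0) : w + v ≠ 0 := by
  intro h
  apply hv
  rw [Prod.ext_iff, Prod.fst_zero, Prod.snd_zero] at h ⊢
  rw [Prod.fst_add, Prod.snd_add] at h
  omega

lemma prod_mm_decomp {v : ℕ × ℕ} (hv : v ≠ 0) {M : Multiset (ℕ × ℕ)}
    (hM : (0 : ℕ × ℕ) ∉ M) :
    ∃ b : ℕ, 0 < b ∧ ∃ r ∈ Submodule.span ℂ (lowSet (Multiset.card M + 1)),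
      mm {v} * mm M = (b : ℂ) • mm (v ::ₘ M) + r := by
  classical
  have htop : (v ::ₘ M) ∉ M.toFinset.image (fun w => (w + v) ::ₘ M.erase w) := by
    intro h
    obtain ⟨w, hw, heq⟩ := Finset.mem_image.1 h
    have hwM : w ∈ M := Multiset.mem_toFinset.1 hw
    have hpos : 0 < Multiset.card M := Multiset.card_pos_iff_exists_mem.2 ⟨w, hwM⟩
    have hcard := congrArg Multiset.card heq
    rw [Multiset.card_cons, Multiset.card_cons, Multiset.card_erase_of_mem hwM,
      Nat.pred_eq_sub_one] at hcard
    omega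
  refine ⟨acoef v M (v ::ₘ M), acoef_cons_pos v M,
    ∑ μ ∈ M.toFinset.image (fun w => (w + v) ::ₘ M.erase w), (acoef v M μ : ℂ) • mm μ,
    ?_, ?_⟩
  · apply Submodule.sum_mem
    intro μ hμ
    apply Submodule.smul_mem
    apply Submodule.subset_span
    obtain ⟨w, hw, rfl⟩ := Finset.mem_image.1 hμ
    have hwM : w ∈ M := Multiset.mem_toFinset.1 hw
    refine ⟨(w + v) ::ₘ M.erase w, ?_, ?_, rfl⟩
    · intro h0
      rcases Multiset.mem_cons.1 h0 with h | h
      · exact zero_add_ne hv h.symm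
      · exact hM (Multiset.mem_of_mem_erase h)
    · rw [Multiset.card_cons, Multiset.card_erase_of_mem hwM, Nat.pred_eq_sub_one]
      have hpos : 0 < Multiset.card M := Multiset.card_pos_iff_exists_mem.2 ⟨w, hwM⟩
      omega
  · rw [prod_mm hv M, T, Finset.sum_insert htop]

lemma mul_mm_mem {v : ℕ × ℕ} (hv : v ≠ 0) {μ : Multiset (ℕ × ℕ)}
    (hμ : (0 : ℕ × ℕ) ∉ μ) {m : ℕ} (h : Multiset.card μ < m) :
    mm {v} * mm μ ∈ Submodule.span ℂ (lowSet (m + 1)) := by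
  obtain ⟨b, hb, r, hr, heq⟩ := prod_mm_decomp hv hμ
  rw [heq]
  apply Submodule.add_mem
  · apply Submodule.smul_mem
    apply Submodule.subset_span
    refine ⟨v ::ₘ μ, ?_, ?_, rfl⟩
    · intro h0
      rcases Multiset.mem_cons.1 h0 with h0 | h0
      · exact hv h0.symm
      · exact hμ h0
    · rw [Multiset.card_cons]; omega
  · exact Submodule.span_mono (lowSet_mono (by omega)) hr

lemma exp (Λ : Multiset (ℕ × ℕ)) (hΛ : (0 : ℕ × ℕ) ∉ Λ) :
    ∃ c : ℕ, 0 < c ∧ ∃ r ∈ Submodule.span ℂ (lowSet (Multiset.card Λ)),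
      P Λ = (c : ℂ) • mm Λ + r := by
  induction Λ using Multiset.induction_on with
  | empty =>
      refine ⟨1, one_pos, 0, Submodule.zero_mem _, ?_⟩
      rw [P, Multiset.map_zero, Multiset.prod_zero, mm_zero]
      simp
  | cons v Λ ih =>
      have hv : v ≠ 0 := fun h => hΛ (h ▸ Multiset.mem_cons_self _ _)
      have hΛ' : (0 : ℕ × ℕ) ∉ Λ := fun h => hΛ (Multiset.mem_cons_of_mem h)
      obtain ⟨c₀, hc₀, r₀, hr₀, hP₀⟩ := ih hΛ'
      obtain ⟨b, hb, r₁, hr₁, hprod⟩ := prod_mm_decomp hv hΛ'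
      refine ⟨c₀ * b, Nat.mul_pos hc₀ hb, (c₀ : ℂ) • r₁ + mm {v} * r₀, ?_, ?_⟩
      · apply Submodule.add_mem
        · apply Submodule.smul_mem
          rw [Multiset.card_cons]
          exact Submodule.span_mono (lowSet_mono le_rfl) hr₁
        · -- mm {v} * r₀ ∈ span
          have himg : mm {v} * r₀ = LinearMap.mulLeft ℂ (mm {v}) r₀ := rfl
          rw [himg, Multiset.card_cons]
          have hmap : LinearMap.mulLeft ℂ (mm {v}) r₀ ∈
              Submodule.map (LinearMap.mulLeft ℂ (mm {v}))
                (Submodule.span ℂ (lowSet (Multiset.card Λ))) :=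
            Submodule.mem_map_of_mem hr₀
          rw [Submodule.map_span] at hmap
          refine Submodule.span_le.2 ?_ hmap
          rintro x ⟨y, ⟨μ, h0, hc, rfl⟩, rfl⟩
          exact mul_mm_mem hv h0 hc
      · rw [P, Multiset.map_cons, Multiset.prod_cons, ← P, hP₀, mul_add, mul_smul_comm, hprod]
        rw [smul_add, smul_smul]
        push_cast
        ring_nf

abbrev V := {v : ℕ × ℕ // v ≠ (0, 0)}

noncomputable def xfam : V → MvPowerSeries I ℂ := fun p => mm {(p : ℕ × ℕ)}

/-- The bipartite partition attached to a monomial in the generators. -/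
noncomputable def Lam (k : V →₀ ℕ) : Multiset (ℕ × ℕ) := (Finsupp.toMultiset k).map Subtype.val

lemma Lam_injective : Function.Injective Lam := by
  classical
  intro f g h
  have h2 : Finsupp.toMultiset f = Finsupp.toMultiset g :=
    Multiset.map_injective Subtype.val_injective h
  have := congrArg Multiset.toFinsupp h2
  rwa [Finsupp.toMultiset_toFinsupp, Finsupp.toMultiset_toFinsupp] at this

lemma zero_not_mem_Lam (k : V →₀ ℕ) : (0 : ℕ × ℕ) ∉ Lam k := by
  rw [Lam]
  intro h
  obtain ⟨⟨v, hv⟩, _, h0⟩ := Multiset.mem_map.1 h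
  exact hv h0

lemma P_add (μ ν : Multiset (ℕ × ℕ)) : P (μ + ν) = P μ * P ν := by
  rw [P, P, P, Multiset.map_add, Multiset.prod_add]

lemma P_lambda (k : V →₀ ℕ) :
    (k.prod fun i n => mm {(i : ℕ × ℕ)} ^ n) = P (Lam k) := by
  classical
  induction k using Finsupp.induction with
  | zero =>
      rw [Finsupp.prod_zero_index, Lam]
      simp [P]
  | single_add a b f ha hb ih =>
      rw [Finsupp.prod_add_index' (fun _ => pow_zero _) (fun _ _ _ => pow_add _ _ _),
        Finsupp.prod_single_index, ih]
      swap
      · exact pow_zero _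
      have hLam : Lam (Finsupp.single a b + f) = b • {(a : ℕ × ℕ)} + Lam f := by
        rw [Lam, map_add, Multiset.map_add]
        congr 1
        · rw [Finsupp.toMultiset_single, Multiset.map_nsmul, Multiset.map_singleton]
      rw [hLam, P_add]
      congr 1
      rw [P, Multiset.map_nsmul, Multiset.map_singleton, Multiset.prod_nsmul,
        Multiset.prod_singleton]

lemma coeff_vanish {d₀ : I →₀ ℕ} {n : ℕ} (hn : n ≤ Multiset.card (mset d₀))
    {r : MvPowerSeries I ℂ} (hr : r ∈ Submodule.span ℂ (lowSet n)) :
    MvPowerSeries.coeff d₀ r = 0 := by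
  have hker : Submodule.span ℂ (lowSet n) ≤ LinearMap.ker (MvPowerSeries.coeff d₀) := by
    apply Submodule.span_le.2
    rintro x ⟨μ, h0, hc, rfl⟩
    rw [SetLike.mem_coe, LinearMap.mem_ker, coeff_mm, if_neg]
    intro h
    rw [← h] at hc
    omega
  exact LinearMap.mem_ker.1 (hker hr)

lemma indep : AlgebraicIndependent ℂ xfam := by
  classical
  rw [algebraicIndependent_iff]
  intro p hp
  by_contra hne
  obtain ⟨k₀, hk₀mem, hmax⟩ := Finset.exists_max_image p.support
    (fun k => Multiset.card (Lam k)) (MvPolynomial.support_nonempty.2 hne)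
  obtain ⟨d₀, hd₀⟩ := exists_mset (Lam k₀) (zero_not_mem_Lam k₀)
  have hexp : (MvPolynomial.aeval xfam) p =
      ∑ k ∈ p.support, MvPolynomial.coeff k p • P (Lam k) := by
    conv_lhs => rw [MvPolynomial.as_sum p]
    rw [map_sum]
    apply Finset.sum_congr rfl
    intro k _
    rw [MvPolynomial.aeval_monomial, ← Algebra.smul_def]
    congr 1
    exact P_lambda k
  have h0 : (0 : ℂ) = ∑ k ∈ p.support,
      MvPolynomial.coeff k p * MvPowerSeries.coeff d₀ (P (Lam k)) := by
    have := congrArg (MvPowerSeries.coeff d₀) (hexp ▸ hp)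
    rw [map_sum] at this
    refine this.symm.trans ?_
    apply Finset.sum_congr rfl
    intro k _
    rw [LinearMap.map_smul, smul_eq_mul]
  have hcoeffP : ∀ k ∈ p.support,
      MvPowerSeries.coeff d₀ (P (Lam k)) = if k = k₀ then
        MvPowerSeries.coeff d₀ (P (Lam k₀)) else 0 := by
    intro k hk
    by_cases hkk : k = k₀
    · rw [if_pos hkk, hkk]
    · rw [if_neg hkk]
      obtain ⟨c, hc, r, hr, hP⟩ := exp (Lam k) (zero_not_mem_Lam k)
      rw [hP, map_add, LinearMap.map_smul, coeff_mm, hd₀, if_neg, smul_zero, zero_add]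
      · exact coeff_vanish (by rw [hd₀]; exact hmax k hk) hr
      · intro h
        exact hkk (Lam_injective h.symm)
  have hsum : (0 : ℂ) = MvPolynomial.coeff k₀ p * MvPowerSeries.coeff d₀ (P (Lam k₀)) := by
    rw [h0, Finset.sum_eq_single_of_mem k₀ hk₀mem]
    intro k hk hkk
    rw [hcoeffP k hk, if_neg hkk, mul_zero]
  obtain ⟨c, hc, r, hr, hP⟩ := exp (Lam k₀) (zero_not_mem_Lam k₀)
  have hcoeff0 : MvPowerSeries.coeff d₀ (P (Lam k₀)) = (c : ℂ) := by
    rw [hP, map_add, LinearMap.map_smul, coeff_mm, hd₀, if_pos rfl, smul_eq_mul, mul_one,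
      coeff_vanish (le_of_eq (by rw [hd₀])) hr, add_zero]
  rw [hcoeff0] at hsum
  have hc0 : (c : ℂ) ≠ 0 := Nat.cast_ne_zero.2 hc.ne'
  have : MvPolynomial.coeff k₀ p = 0 := by
    rcases mul_eq_zero.1 hsum.symm with h | h
    · exact h
    · exact absurd h hc0
  exact (MvPolynomial.mem_support_iff.1 hk₀mem) this

def targetSet : Set (MvPowerSeries I ℂ) :=
  {x | ∃ Λ : Multiset (ℕ × ℕ), (0, 0) ∉ Λ ∧ x = mm Λ}

lemma lowSet_subset_target (n : ℕ) : lowSet n ⊆ targetSet := by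
  rintro x ⟨μ, h0, _, rfl⟩
  exact ⟨μ, h0, rfl⟩

lemma P_mem_span (Λ : Multiset (ℕ × ℕ)) (hΛ : (0 : ℕ × ℕ) ∉ Λ) :
    P Λ ∈ Submodule.span ℂ targetSet := by
  obtain ⟨c, _, r, hr, hP⟩ := exp Λ hΛ
  rw [hP]
  apply Submodule.add_mem
  · exact Submodule.smul_mem _ _ (Submodule.subset_span ⟨Λ, hΛ, rfl⟩)
  · exact Submodule.span_mono (lowSet_subset_target _) hr

lemma span_le_dir :
    Subalgebra.toSubmodule (Algebra.adjoin ℂ (Set.range xfam)) ≤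
      Submodule.span ℂ targetSet := by
  rw [Algebra.adjoin_eq_span]
  apply Submodule.span_le.2
  intro y hy
  rw [SetLike.mem_coe] at hy
  obtain ⟨m, hmem, hprod⟩ := Submonoid.exists_multiset_of_mem_closure hy
  have key : ∀ m : Multiset (MvPowerSeries I ℂ), (∀ y ∈ m, y ∈ Set.range xfam) →
      ∃ Λ : Multiset (ℕ × ℕ), (0 : ℕ × ℕ) ∉ Λ ∧ m = Λ.map (fun v => mm {v}) := by
    intro m
    induction m using Multiset.induction_on with
    | empty => exact fun _ => ⟨0, by simp, by simp⟩
    | cons z m ih =>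
        intro hmem
        obtain ⟨Λ, h0, rfl⟩ := ih (fun y hy => hmem y (Multiset.mem_cons_of_mem hy))
        obtain ⟨⟨v, hv⟩, rfl⟩ := hmem z (Multiset.mem_cons_self _ _)
        refine ⟨v ::ₘ Λ, ?_, by rw [Multiset.map_cons]; rfl⟩
        intro h
        rcases Multiset.mem_cons.1 h with h | h
        · exact hv h.symm
        · exact h0 h
  obtain ⟨Λ, h0, hmeq⟩ := key m hmem
  rw [← hprod, hmeq]
  exact P_mem_span Λ h0

lemma mm_mem_adjoin : ∀ (n : ℕ) (Λ : Multiset (ℕ × ℕ)), Multiset.card Λ = n →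
    (0 : ℕ × ℕ) ∉ Λ → mm Λ ∈ Algebra.adjoin ℂ (Set.range xfam) := by
  intro n
  induction n using Nat.strong_induction_on with
  | _ n ih =>
      intro Λ hcard h0
      obtain ⟨c, hc, r, hr, hP⟩ := exp Λ h0
      have hPmem : P Λ ∈ Algebra.adjoin ℂ (Set.range xfam) := by
        rw [P]
        apply multiset_prod_mem
        intro a ha
        obtain ⟨v, hv, rfl⟩ := Multiset.mem_map.1 ha
        have hvne : v ≠ (0, 0) := fun h => h0 (show ((0, 0) : ℕ × ℕ) ∈ Λ from h ▸ hv)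
        exact Algebra.subset_adjoin ⟨⟨v, hvne⟩, rfl⟩
      have hrmem : r ∈ Algebra.adjoin ℂ (Set.range xfam) := by
        have hle : Submodule.span ℂ (lowSet (Multiset.card Λ)) ≤
            Subalgebra.toSubmodule (Algebra.adjoin ℂ (Set.range xfam)) := by
          apply Submodule.span_le.2
          rintro x ⟨μ, hμ0, hμc, rfl⟩
          exact ih (Multiset.card μ) (by omega) μ rfl hμ0
        exact hle hr
      have hc0 : (c : ℂ) ≠ 0 := Nat.cast_ne_zero.2 hc.ne'
      have hmm : mm Λ = (c : ℂ)⁻¹ • (P Λ - r) := by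
        rw [hP]
        rw [add_sub_cancel_right, smul_smul, inv_mul_cancel₀ hc0, one_smul]
      rw [hmm]
      exact Subalgebra.smul_mem _ (sub_mem hPmem hrmem) _

lemma span_ge_dir :
    Submodule.span ℂ targetSet ≤
      Subalgebra.toSubmodule (Algebra.adjoin ℂ (Set.range xfam)) := by
  apply Submodule.span_le.2
  rintro y ⟨Λ, h0, rfl⟩
  exact mm_mem_adjoin (Multiset.card Λ) Λ rfl h0

end MacMahon

/-- The ring of MacMahon symmetric functions `S` (the span of all monomial symmetric
functions `m_Λ`) is a polynomial ring freely generated by the `m_{(a,b)}`,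
`(a,b) ≠ (0,0)`: these elements are algebraically independent over `ℂ` and the
subalgebra they generate coincides, as a submodule, with the span of all `m_Λ`. -/
theorem stmt4 :
    AlgebraicIndependent ℂ
      (fun p : {v : ℕ × ℕ // v ≠ (0, 0)} => mm {(p : ℕ × ℕ)}) ∧
    Subalgebra.toSubmodule
        (Algebra.adjoin ℂ
          (Set.range (fun p : {v : ℕ × ℕ // v ≠ (0, 0)} => mm {(p : ℕ × ℕ)}))) =
      Submodule.span ℂ {x | ∃ Λ : Multiset (ℕ × ℕ), (0, 0) ∉ Λ ∧ x = mm Λ} := by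
  exact ⟨MacMahon.indep, le_antisymm MacMahon.span_le_dir MacMahon.span_ge_dir⟩
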